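/- Let m ≥ n ≥ 2 and let G be the ordered graph on vertices v_1, ..., v_{m+n} whose only edges are v_1 v_{m+1} and v_m v_{m+n}. Then every 2-coloring of the edges of the complete graph on the linearly ordered vertex set {1, ..., 2m+n-1} contains a monochromatic ordered copy of G. -/

import Mathlib

/-- A `t`-edge-coloring `c` of the complete graph on the ordered vertex set `Fin N`
contains a monochromatic ordered copy of the ordered graph `G` on `Fin M`. -/
def HasMonoCopy {M N t : ℕ} (G : SimpleGraph (Fin M)) (c : Fin N → Fin N → Fin t) : Prop :=
  ∃ k : Fin t, ∃ f : Fin M → Fin N, StrictMono f ∧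
    ∀ u v : Fin M, u < v → G.Adj u v → c (f u) (f v) = k

/-- The `t`-color ordered Ramsey number of the ordered graph `G`: the least `N` such that
every `t`-coloring of the edges of the complete graph on `Fin N` contains a monochromatic
ordered copy of `G`. -/
noncomputable def orderedRamsey {M : ℕ} (t : ℕ) (G : SimpleGraph (Fin M)) : ℕ :=
  sInf {N : ℕ | ∀ c : Fin N → Fin N → Fin t, HasMonoCopy G c}

/-- An interval coloring of an ordered graph with `k` parts, encoded as a monotone
surjection onto `Fin k` whose fibers (the parts, which are intervals of consecutive
vertices) are independent sets. -/
def IsIntervalColoring {N k : ℕ} (G : SimpleGraph (Fin N)) (p : Fin N → Fin k) : Prop :=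
  Monotone p ∧ Function.Surjective p ∧ ∀ u v : Fin N, G.Adj u v → p u ≠ p v

/-- The interval chromatic number of an ordered graph. -/
noncomputable def intervalChromatic {N : ℕ} (G : SimpleGraph (Fin N)) : ℕ :=
  sInf {k : ℕ | ∃ p : Fin N → Fin k, IsIntervalColoring G p}


lemma fin2_eq {a b c : Fin 2} (h1 : a ≠ b) (h2 : a ≠ c) : b = c := by
  fin_cases a <;> fin_cases b <;> fin_cases c <;> simp_all

lemma embed_exists {m n : ℕ} (hn : 2 ≤ n) (hnm : n ≤ m)
    (p q r s : ℕ) (hpr : p + m ≤ r + 1) (hrq : r < q) (hqs : q + n ≤ s + 1)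
    (hs : s + 1 < 2 * m + n) :
    ∃ f : Fin (m + n) → Fin (2 * m + n - 1), StrictMono f ∧
      (f ⟨0, by omega⟩).val = p ∧ (f ⟨m - 1, by omega⟩).val = r ∧
      (f ⟨m, by omega⟩).val = q ∧ (f ⟨m + n - 1, by omega⟩).val = s := by
  have hm : 2 ≤ m := hn.trans hnm
  refine ⟨fun i => ⟨if i.val + 2 ≤ m then p + i.val
      else if i.val + 1 = m then r
      else if i.val + 2 ≤ m + n then q + (i.val - m) else s,
      by have := i.isLt; split_ifs <;> omega⟩, ?_, ?_, ?_, ?_, ?_⟩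
  · intro a b hab
    have ha := a.isLt; have hb := b.isLt
    have hab' : a.val < b.val := hab
    simp only [Fin.lt_def]
    split_ifs <;> omega
  all_goals simp only [Fin.val_mk]; split_ifs <;> omega

lemma key_copy {m n : ℕ} (hn : 2 ≤ n) (hnm : n ≤ m)
    (G : SimpleGraph (Fin (m + n)))
    (hG : G = SimpleGraph.fromEdgeSet
      {s((⟨0, by have := 0; omega⟩ : Fin (m + n)), (⟨m, by have := 0; omega⟩ : Fin (m + n))),
       s((⟨m - 1, by have := 0; omega⟩ : Fin (m + n)), (⟨m + n - 1, by have := 0; omega⟩ : Fin (m + n)))})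
    (c : Fin (2 * m + n - 1) → Fin (2 * m + n - 1) → Fin 2)
    (p q r s : ℕ) (hpr : p + m ≤ r + 1) (hrq : r < q) (hqs : q + n ≤ s + 1)
    (hs : s + 1 < 2 * m + n)
    (hcol : c ⟨p, by omega⟩ ⟨q, by omega⟩ = c ⟨r, by omega⟩ ⟨s, by omega⟩) :
    HasMonoCopy G c := by
  obtain ⟨f, hmono, h0, h1, h2, h3⟩ := embed_exists hn hnm p q r s hpr hrq hqs hs
  refine ⟨c ⟨p, by omega⟩ ⟨q, by omega⟩, f, hmono, ?_⟩
  intro u v huv hadj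
  subst hG
  rw [SimpleGraph.fromEdgeSet_adj] at hadj
  obtain ⟨hmem, hne⟩ := hadj
  simp only [Set.mem_insert_iff, Set.mem_singleton_iff] at hmem
  have hlt : u.val < v.val := huv
  rcases hmem with h | h <;> rw [Sym2.eq_iff] at h <;>
      rcases h with ⟨hu, hv⟩ | ⟨hu, hv⟩
  · rw [hu, hv]
    exact congrArg₂ c (Fin.ext h0) (Fin.ext h2)
  · rw [hu, hv] at hlt; simp only [Fin.val_mk] at hlt; omega
  · rw [hu, hv]
    exact (congrArg₂ c (Fin.ext h1) (Fin.ext h3)).trans hcol.symm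
  · rw [hu, hv] at hlt; simp only [Fin.val_mk] at hlt; omega

/-- Let `m ≥ n ≥ 2` and let `G` be the ordered graph on `v_1,…,v_{m+n}` whose only
edges are `v_1 v_{m+1}` and `v_m v_{m+n}`. Then every 2-coloring of the edges of the
complete graph on the ordered vertex set `{1,…,2m+n-1}` contains a monochromatic
ordered copy of `G`. -/
theorem stmt7 {m n : ℕ} (hn : 2 ≤ n) (hnm : n ≤ m)
    (G : SimpleGraph (Fin (m + n)))
    (hG : G = SimpleGraph.fromEdgeSet
      {s((⟨0, by omega⟩ : Fin (m + n)), (⟨m, by omega⟩ : Fin (m + n))),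
       s((⟨m - 1, by omega⟩ : Fin (m + n)), (⟨m + n - 1, by omega⟩ : Fin (m + n)))}) :
    ∀ c : Fin (2 * m + n - 1) → Fin (2 * m + n - 1) → Fin 2,
      HasMonoCopy G c := by
  intro c
  have hm : 2 ≤ m := hn.trans hnm
  by_cases h12 : c ⟨0, by omega⟩ ⟨m, by omega⟩ = c ⟨m - 1, by omega⟩ ⟨2 * m - 1, by omega⟩
  · exact key_copy hn hnm G hG c 0 m (m - 1) (2 * m - 1) (by omega) (by omega) (by omega)
      (by omega) (by convert h12 using 3 <;> omega)
  by_cases h23 : c ⟨m - 1, by omega⟩ ⟨2 * m - 1, by omega⟩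
      = c ⟨2 * m - 2, by omega⟩ ⟨2 * m + n - 2, by omega⟩
  · exact key_copy hn hnm G hG c (m - 1) (2 * m - 1) (2 * m - 2) (2 * m + n - 2) (by omega)
      (by omega) (by omega) (by omega) (by convert h23 using 3 <;> omega)
  by_cases h15 : c ⟨0, by omega⟩ ⟨m, by omega⟩ = c ⟨m - 1, by omega⟩ ⟨2 * m + n - 2, by omega⟩
  · exact key_copy hn hnm G hG c 0 m (m - 1) (2 * m + n - 2) (by omega) (by omega) (by omega)
      (by omega) (by convert h15 using 3 <;> omega)
  by_cases h45 : c ⟨0, by omega⟩ ⟨2 * m - 1, by omega⟩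
      = c ⟨m - 1, by omega⟩ ⟨2 * m + n - 2, by omega⟩
  · exact key_copy hn hnm G hG c 0 (2 * m - 1) (m - 1) (2 * m + n - 2) (by omega) (by omega)
      (by omega) (by omega) (by convert h45 using 3 <;> omega)
  · have h13 := fin2_eq (Ne.symm h12) h23
    have h25 := fin2_eq h12 h15
    have h42 : c ⟨0, by omega⟩ ⟨2 * m - 1, by omega⟩
        ≠ c ⟨m - 1, by omega⟩ ⟨2 * m - 1, by omega⟩ := fun h => h45 (h.trans h25)
    have h43 := fin2_eq (Ne.symm h42) (Ne.symm h12)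
    exact key_copy hn hnm G hG c 0 (2 * m - 1) (2 * m - 2) (2 * m + n - 2) (by omega)
      (by omega) (by omega) (by omega)
      (by convert (h43.trans h13) using 3 <;> omega)
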